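/- arXiv:1902.07820 — 4 statements merged into one kernel-verified Lean document; each statement's English description precedes it below -/
import Mathlib

section
/- For every real σ with σ > max(ρ(A)², 1) there exists a constant C > 0 such that Tr(f^n(P̄₀)) ≤ C σⁿ for all integers n ≥ 1. (Exponential growth bound on the one-stage costs, via the spectral radius of A.) -/
open Matrix

/-- The Riccati-type operator `f(X) = A X Aᵀ + Q`. -/
def fop {n : ℕ} (A Q : Matrix (Fin n) (Fin n) ℝ) (X : Matrix (Fin n) (Fin n) ℝ) :
    Matrix (Fin n) (Fin n) ℝ :=
  A * X * Aᵀ + Q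

/-- The spectral radius of a real square matrix: the maximum modulus of its
(complex) eigenvalues. -/
noncomputable def rho {n : ℕ} (A : Matrix (Fin n) (Fin n) ℝ) : ℝ :=
  sSup ((fun z : ℂ => ‖z‖) '' spectrum ℂ (A.map Complex.ofReal))

section Aux

open Filter
open scoped ENNReal NNReal

attribute [local instance] Matrix.frobeniusSeminormedAddCommGroup
  Matrix.frobeniusNormedAddCommGroup Matrix.frobeniusNormedSpace
  Matrix.frobeniusNormedRing Matrix.frobeniusNormedAlgebra

variable {d : ℕ}

private lemma traceNN (N : Matrix (Fin d) (Fin d) ℝ) : (N * Nᵀ).trace = ‖N‖ ^ 2 := by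
  have h1 : ‖N‖ ^ 2 = ((∑ i, ∑ j, ‖N i j‖ ^ (2:ℝ)) ^ (1/2 : ℝ)) ^ 2 := by
    rw [Matrix.frobenius_norm_def]
  have hs : (0:ℝ) ≤ ∑ i, ∑ j, ‖N i j‖ ^ (2:ℝ) := by positivity
  rw [h1, ← Real.rpow_natCast (_ ^ (1/2:ℝ)) 2, ← Real.rpow_mul hs]
  norm_num
  simp [Matrix.trace, Matrix.mul_apply, Matrix.diag, Real.rpow_two, Real.norm_eq_abs, sq_abs,
    pow_two]

private lemma exists_sqrt {X : Matrix (Fin d) (Fin d) ℝ} (hX : X.PosSemidef) :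
    ∃ S : Matrix (Fin d) (Fin d) ℝ, Sᵀ = S ∧ S * S = X := by
  open scoped MatrixOrder in
  refine ⟨CFC.sqrt X, ?_, CFC.sqrt_mul_sqrt_self X hX.nonneg⟩
  rw [← Matrix.conjTranspose_eq_transpose_of_trivial]
  open scoped MatrixOrder in
  exact (CFC.sqrt_nonneg X).posSemidef.1

private lemma trace_psd_nonneg {X : Matrix (Fin d) (Fin d) ℝ} (hX : X.PosSemidef) :
    0 ≤ X.trace := by
  obtain ⟨S, hSt, hSS⟩ := exists_sqrt hX
  have : X.trace = ‖S‖ ^ 2 := by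
    conv_lhs => rw [← hSS, show S * S = S * Sᵀ by rw [hSt]]
    exact traceNN S
  rw [this]; positivity

private lemma trace_conj_le (M : Matrix (Fin d) (Fin d) ℝ) {X : Matrix (Fin d) (Fin d) ℝ}
    (hX : X.PosSemidef) : (M * X * Mᵀ).trace ≤ ‖M‖ ^ 2 * X.trace := by
  obtain ⟨S, hSt, hSS⟩ := exists_sqrt hX
  have hMX : M * X * Mᵀ = (M * S) * (M * S)ᵀ := by
    rw [Matrix.transpose_mul, hSt, ← hSS]
    simp only [mul_assoc]
  have hXtr : X.trace = ‖S‖ ^ 2 := by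
    conv_lhs => rw [← hSS, show S * S = S * Sᵀ by rw [hSt]]
    exact traceNN S
  rw [hMX, traceNN, hXtr]
  calc ‖M * S‖ ^ 2 ≤ (‖M‖ * ‖S‖) ^ 2 :=
        pow_le_pow_left₀ (norm_nonneg _) (norm_mul_le M S) 2
    _ = ‖M‖ ^ 2 * ‖S‖ ^ 2 := by ring

private lemma conj_step (A Q : Matrix (Fin d) (Fin d) ℝ) (k : ℕ) :
    A * (A ^ k * Q * (A ^ k)ᵀ) * Aᵀ = A ^ (k+1) * Q * (A ^ (k+1))ᵀ := by
  rw [pow_succ' A k, Matrix.transpose_mul]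
  simp only [mul_assoc]

private lemma iterate_fop (A Q X : Matrix (Fin d) (Fin d) ℝ) (n : ℕ) :
    (fop A Q)^[n] X
      = A ^ n * X * (A ^ n)ᵀ + ∑ k ∈ Finset.range n, A ^ k * Q * (A ^ k)ᵀ := by
  induction n with
  | zero => simp
  | succ n ih =>
      rw [Function.iterate_succ_apply', ih]
      show A * _ * Aᵀ + Q = _
      rw [Matrix.mul_add, Matrix.add_mul, Finset.mul_sum, Finset.sum_mul,
        Finset.sum_range_succ' (fun k => A ^ k * Q * (A ^ k)ᵀ), conj_step]
      simp only [conj_step]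
      rw [add_assoc]
      congr 2
      simp

private lemma rho_nonneg (A : Matrix (Fin d) (Fin d) ℝ) : 0 ≤ rho A := by
  apply Real.sSup_nonneg
  rintro x ⟨z, -, rfl⟩
  exact norm_nonneg z

private lemma spectralRadius_le (A : Matrix (Fin d) (Fin d) ℝ) :
    spectralRadius ℂ (A.map Complex.ofReal) ≤ ENNReal.ofReal (rho A) := by
  haveI : CompleteSpace (Matrix (Fin d) (Fin d) ℂ) := FiniteDimensional.complete ℂ _
  set M := A.map Complex.ofReal
  have hb : BddAbove ((fun z : ℂ => ‖z‖) '' spectrum ℂ M) :=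
    (((spectrum.isCompact M).image (continuous_norm)).bddAbove)
  rw [spectralRadius]
  refine iSup₂_le fun k hk => ?_
  have : ‖k‖ ≤ rho A := le_csSup hb ⟨k, hk, rfl⟩
  calc (‖k‖₊ : ℝ≥0∞) = ENNReal.ofReal ‖k‖ := (ofReal_norm k).symm
    _ ≤ ENNReal.ofReal (rho A) := ENNReal.ofReal_le_ofReal this

private lemma norm_pow_eventually_le (A : Matrix (Fin d) (Fin d) ℝ) {t : ℝ} (ht : rho A < t) :
    ∀ᶠ n : ℕ in atTop, ‖A ^ n‖ ≤ t ^ n := by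
  haveI : CompleteSpace (Matrix (Fin d) (Fin d) ℂ) := FiniteDimensional.complete ℂ _
  set M := A.map Complex.ofReal with hM
  have ht0 : 0 < t := lt_of_le_of_lt (rho_nonneg A) ht
  have hlt : spectralRadius ℂ M < ENNReal.ofReal t :=
    lt_of_le_of_lt (spectralRadius_le A)
      (by exact_mod_cast (ENNReal.ofReal_lt_ofReal_iff ht0).mpr ht)
  have hc := (spectrum.pow_nnnorm_pow_one_div_tendsto_nhds_spectralRadius M).eventually_lt_const hlt
  filter_upwards [hc, eventually_ge_atTop 1] with n hn hn1
  have hnorm : ‖A ^ n‖ = ‖M ^ n‖ := by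
    have hmp : M ^ n = (A ^ n).map Complex.ofReal := by
      rw [hM]
      exact (map_pow (Complex.ofRealHom.mapMatrix) A n).symm
    rw [hmp]
    exact (Matrix.frobenius_norm_map_eq (A ^ n) _ (fun a => Complex.norm_real a)).symm
  have hne : (n : ℝ) ≠ 0 := by positivity
  have h2 : (‖M ^ n‖₊ : ℝ≥0∞) ≤ (ENNReal.ofReal t) ^ (n : ℝ) := by
    have := ENNReal.rpow_le_rpow hn.le (le_of_lt (by positivity : (0:ℝ) < n))
    rwa [← ENNReal.rpow_mul, one_div, inv_mul_cancel₀ hne, ENNReal.rpow_one] at this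
  rw [hnorm]
  have h3 : (ENNReal.ofReal t) ^ (n : ℝ) = ENNReal.ofReal (t ^ n) := by
    rw [ENNReal.ofReal_rpow_of_pos ht0, Real.rpow_natCast]
  rw [h3, ← enorm_eq_nnnorm, ← ofReal_norm] at h2
  exact (ENNReal.ofReal_le_ofReal_iff (by positivity)).mp h2

private lemma norm_pow_le_all (A : Matrix (Fin d) (Fin d) ℝ) {t : ℝ} (ht : rho A < t) :
    ∃ C : ℝ, 0 < C ∧ ∀ n : ℕ, ‖A ^ n‖ ≤ C * t ^ n := by
  have ht0 : 0 < t := lt_of_le_of_lt (rho_nonneg A) ht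
  obtain ⟨N, hN⟩ := (norm_pow_eventually_le A ht).exists_forall_of_atTop
  have hsumnn : (0:ℝ) ≤ ∑ k ∈ Finset.range N, ‖A ^ k‖ / t ^ k := by positivity
  refine ⟨1 + ∑ k ∈ Finset.range N, ‖A ^ k‖ / t ^ k, by linarith, fun n => ?_⟩
  rcases le_or_gt N n with h | h
  · calc ‖A ^ n‖ ≤ t ^ n := hN n h
      _ ≤ (1 + ∑ k ∈ Finset.range N, ‖A ^ k‖ / t ^ k) * t ^ n := by
          nlinarith [pow_pos ht0 n]
  · have h1 : ‖A ^ n‖ / t ^ n ≤ ∑ k ∈ Finset.range N, ‖A ^ k‖ / t ^ k :=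
      Finset.single_le_sum (f := fun k => ‖A ^ k‖ / t ^ k)
        (fun k _ => by positivity) (Finset.mem_range.mpr h)
    have h2 : ‖A ^ n‖ / t ^ n ≤ 1 + ∑ k ∈ Finset.range N, ‖A ^ k‖ / t ^ k := by linarith
    calc ‖A ^ n‖ = (‖A ^ n‖ / t ^ n) * t ^ n := by field_simp
      _ ≤ (1 + ∑ k ∈ Finset.range N, ‖A ^ k‖ / t ^ k) * t ^ n :=
          mul_le_mul_of_nonneg_right h2 (le_of_lt (pow_pos ht0 n))

/-- Exponential growth bound on the one-stage costs: for every `σ > max(ρ(A)², 1)`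
there is `C > 0` with `Tr(f^n(P̄₀)) ≤ C σⁿ` for all `n ≥ 1`. -/
theorem trace_iterate_exp_bound {d : ℕ} (A Q P0 : Matrix (Fin d) (Fin d) ℝ)
    (hQ : Q.PosSemidef) (hP0 : P0.PosSemidef)
    (σ : ℝ) (hσ : max ((rho A) ^ 2) 1 < σ) :
    ∃ C : ℝ, 0 < C ∧ ∀ n : ℕ, 1 ≤ n → ((fop A Q)^[n] P0).trace ≤ C * σ ^ n := by
  classical
  set σ' : ℝ := (max ((rho A) ^ 2) 1 + σ) / 2 with hσ'def
  have hr1 : (1:ℝ) ≤ max ((rho A) ^ 2) 1 := le_max_right _ _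
  have hrσ' : max ((rho A) ^ 2) 1 < σ' := by rw [hσ'def]; linarith
  have hσ'σ : σ' < σ := by rw [hσ'def]; linarith
  have h1σ' : 1 < σ' := lt_of_le_of_lt hr1 hrσ'
  have hσ'0 : 0 < σ' := by linarith
  have hρ2 : (rho A) ^ 2 < σ' := lt_of_le_of_lt (le_max_left _ _) hrσ'
  set t : ℝ := Real.sqrt σ' with htdef
  have ht2 : t ^ 2 = σ' := Real.sq_sqrt (le_of_lt hσ'0)
  have hρt : rho A < t := (Real.lt_sqrt (rho_nonneg A)).mpr hρ2
  obtain ⟨C₁, hC₁pos, hC₁⟩ := norm_pow_le_all A hρt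
  set Cf : ℝ := max 1 (C₁ ^ 2 * (P0.trace + Q.trace / (σ' - 1))) with hCf
  have hCf1 : (1:ℝ) ≤ Cf := le_max_left _ _
  refine ⟨Cf, by linarith, fun n hn => ?_⟩
  have hP0tr : 0 ≤ P0.trace := trace_psd_nonneg hP0
  have hQtr : 0 ≤ Q.trace := trace_psd_nonneg hQ
  have hnormsq : ∀ k : ℕ, ‖A ^ k‖ ^ 2 ≤ C₁ ^ 2 * σ' ^ k := by
    intro k
    calc ‖A ^ k‖ ^ 2 ≤ (C₁ * t ^ k) ^ 2 := pow_le_pow_left₀ (norm_nonneg _) (hC₁ k) 2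
      _ = C₁ ^ 2 * σ' ^ k := by rw [mul_pow, ← pow_right_comm, ht2]
  -- trace of the iterate
  have hiter : ((fop A Q)^[n] P0).trace
      = (A ^ n * P0 * (A ^ n)ᵀ).trace
        + ∑ k ∈ Finset.range n, (A ^ k * Q * (A ^ k)ᵀ).trace := by
    rw [iterate_fop, Matrix.trace_add, Matrix.trace_sum]
  have hbound1 : (A ^ n * P0 * (A ^ n)ᵀ).trace ≤ C₁ ^ 2 * σ' ^ n * P0.trace := by
    calc (A ^ n * P0 * (A ^ n)ᵀ).trace ≤ ‖A ^ n‖ ^ 2 * P0.trace := trace_conj_le _ hP0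
      _ ≤ C₁ ^ 2 * σ' ^ n * P0.trace :=
          mul_le_mul_of_nonneg_right (hnormsq n) hP0tr
  have hgeom : ∑ k ∈ Finset.range n, σ' ^ k ≤ σ' ^ n / (σ' - 1) := by
    rw [geom_sum_eq (ne_of_gt h1σ')]
    gcongr <;> linarith
  have hbound2 : ∑ k ∈ Finset.range n, (A ^ k * Q * (A ^ k)ᵀ).trace
      ≤ C₁ ^ 2 * Q.trace * (σ' ^ n / (σ' - 1)) := by
    calc ∑ k ∈ Finset.range n, (A ^ k * Q * (A ^ k)ᵀ).trace
        ≤ ∑ k ∈ Finset.range n, C₁ ^ 2 * σ' ^ k * Q.trace := by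
          refine Finset.sum_le_sum fun k _ => ?_
          calc (A ^ k * Q * (A ^ k)ᵀ).trace ≤ ‖A ^ k‖ ^ 2 * Q.trace := trace_conj_le _ hQ
            _ ≤ C₁ ^ 2 * σ' ^ k * Q.trace :=
                mul_le_mul_of_nonneg_right (hnormsq k) hQtr
      _ = C₁ ^ 2 * Q.trace * ∑ k ∈ Finset.range n, σ' ^ k := by
          rw [Finset.mul_sum]; apply Finset.sum_congr rfl; intro k _; ring
      _ ≤ C₁ ^ 2 * Q.trace * (σ' ^ n / (σ' - 1)) := by
          apply mul_le_mul_of_nonneg_left hgeom (by positivity)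
  have hσ'n : σ' ^ n ≤ σ ^ n := pow_le_pow_left₀ (le_of_lt hσ'0) (le_of_lt hσ'σ) n
  have hcoef : C₁ ^ 2 * (P0.trace + Q.trace / (σ' - 1)) ≤ Cf := le_max_right _ _
  calc ((fop A Q)^[n] P0).trace
      = (A ^ n * P0 * (A ^ n)ᵀ).trace
        + ∑ k ∈ Finset.range n, (A ^ k * Q * (A ^ k)ᵀ).trace := hiter
    _ ≤ C₁ ^ 2 * σ' ^ n * P0.trace + C₁ ^ 2 * Q.trace * (σ' ^ n / (σ' - 1)) :=
        add_le_add hbound1 hbound2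
    _ = (C₁ ^ 2 * (P0.trace + Q.trace / (σ' - 1))) * σ' ^ n := by field_simp
    _ ≤ Cf * σ ^ n := by
        apply mul_le_mul hcoef hσ'n (by positivity) (by linarith)

end Aux
end

section
/- If Q is positive definite and γ > 0 satisfies γ · ρ(A)² ≥ 1, then the series ∑_{j=1}^∞ γ^j Tr(f^j(P̄₀)) diverges. (Necessity direction of the summability criterion: with non-degenerate process noise, the geometrically weighted sum of estimation error costs is unbounded when γρ²(A) ≥ 1.) -/
open Matrix

attribute [local instance] Matrix.linftyOpNormedAddCommGroup Matrix.linftyOpNormedSpace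
  Matrix.linftyOpNormedRing Matrix.linftyOpNormedAlgebra

section aux

variable {d : ℕ}

private lemma psd_trace_nonneg {M : Matrix (Fin d) (Fin d) ℝ} (h : M.PosSemidef) :
    0 ≤ M.trace := by
  rw [Matrix.trace]
  refine Finset.sum_nonneg fun i _ => ?_
  simpa using h.2 (Finsupp.single i 1)

private lemma trace_le_of_psd_sub {M N : Matrix (Fin d) (Fin d) ℝ}
    (h : (M - N).PosSemidef) : N.trace ≤ M.trace := by
  have := psd_trace_nonneg h
  rw [Matrix.trace_sub] at this
  linarith

private lemma exists_eps [Nonempty (Fin d)] {Q : Matrix (Fin d) (Fin d) ℝ} (hQ : Q.PosDef) :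
    ∃ ε : ℝ, 0 < ε ∧ (Q - ε • 1).PosSemidef := by
  classical
  have hH : Q.IsHermitian := hQ.1
  obtain ⟨i0, -, hi0⟩ := Finset.exists_mem_eq_inf' (Finset.univ_nonempty) hH.eigenvalues
  refine ⟨Finset.univ.inf' Finset.univ_nonempty hH.eigenvalues,
    by rw [hi0]; exact hQ.eigenvalues_pos i0, ?_⟩
  set ε : ℝ := Finset.univ.inf' Finset.univ_nonempty hH.eigenvalues with hεdef
  set U : Matrix (Fin d) (Fin d) ℝ := (hH.eigenvectorUnitary : Matrix (Fin d) (Fin d) ℝ) with hU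
  have hUU : U * star U = 1 := Matrix.mem_unitaryGroup_iff.mp hH.eigenvectorUnitary.2
  have hsp : Q = U * Matrix.diagonal (RCLike.ofReal ∘ hH.eigenvalues) * star U :=
    hH.spectral_theorem
  have h1 : (ε • (1 : Matrix (Fin d) (Fin d) ℝ)) = U * (ε • 1) * star U := by
    rw [mul_smul_comm, smul_mul_assoc, mul_one, hUU]
  have hdiag : Matrix.diagonal (RCLike.ofReal ∘ hH.eigenvalues)
      - ε • (1 : Matrix (Fin d) (Fin d) ℝ) = Matrix.diagonal (fun i => hH.eigenvalues i - ε) := by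
    rw [Matrix.smul_one_eq_diagonal, Matrix.diagonal_sub]
    congr 1
  have key : Q - ε • 1 = U * Matrix.diagonal (fun i => hH.eigenvalues i - ε) * star U := by
    conv_lhs => rw [hsp, h1]
    rw [← Matrix.sub_mul, ← Matrix.mul_sub, hdiag]
  rw [key]
  have hpsd : (Matrix.diagonal (fun i => hH.eigenvalues i - ε)).PosSemidef :=
    Matrix.PosSemidef.diagonal fun i => sub_nonneg.mpr (Finset.inf'_le _ (Finset.mem_univ i))
  have := hpsd.mul_mul_conjTranspose_same U
  rwa [← Matrix.star_eq_conjTranspose] at this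

private lemma key_psd (A Q P0 : Matrix (Fin d) (Fin d) ℝ)
    (hQ : Q.PosDef) (hP0 : P0.PosSemidef) (j : ℕ) :
    ((fop A Q)^[j+1] P0 - A ^ j * Q * (A ^ j)ᵀ).PosSemidef := by
  induction j with
  | zero =>
    have h := hP0.mul_mul_conjTranspose_same A
    rw [Matrix.conjTranspose_eq_transpose_of_trivial] at h
    simpa [fop] using h
  | succ k ih =>
    rw [Function.iterate_succ_apply']
    have heq : (fop A Q) ((fop A Q)^[k+1] P0) - A ^ (k+1) * Q * (A ^ (k+1))ᵀ
        = A * ((fop A Q)^[k+1] P0 - A ^ k * Q * (A ^ k)ᵀ) * Aᵀ + Q := by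
      have e1 : A ^ (k+1) * Q * (A ^ (k+1))ᵀ = A * (A ^ k * Q * (A ^ k)ᵀ) * Aᵀ := by
        simp only [Matrix.transpose_pow]
        rw [pow_succ' A k, pow_succ (Aᵀ) k]
        simp only [Matrix.mul_assoc]
      simp only [fop, Matrix.mul_sub, Matrix.sub_mul, e1]
      abel
    rw [heq]
    have h := ih.mul_mul_conjTranspose_same A
    rw [Matrix.conjTranspose_eq_transpose_of_trivial] at h
    exact h.add hQ.posSemidef

private lemma trace_eps_le {Q : Matrix (Fin d) (Fin d) ℝ} {ε : ℝ}
    (hQε : (Q - ε • 1).PosSemidef) (M : Matrix (Fin d) (Fin d) ℝ) :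
    ε * (M * Mᵀ).trace ≤ (M * Q * Mᵀ).trace := by
  have h := hQε.mul_mul_conjTranspose_same M
  rw [Matrix.conjTranspose_eq_transpose_of_trivial] at h
  have h2 := psd_trace_nonneg h
  have heq : M * (Q - ε • 1) * Mᵀ = M * Q * Mᵀ - ε • (M * Mᵀ) := by
    rw [Matrix.mul_sub, Matrix.sub_mul, Matrix.mul_smul, Matrix.smul_mul, mul_one]
  rw [heq, Matrix.trace_sub, Matrix.trace_smul, smul_eq_mul] at h2
  linarith

private lemma norm_sq_le_trace [Nonempty (Fin d)] (M : Matrix (Fin d) (Fin d) ℝ) :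
    ‖M‖ ^ 2 ≤ (d : ℝ) * (M * Mᵀ).trace := by
  classical
  obtain ⟨i, -, hi⟩ := Finset.exists_mem_eq_sup (Finset.univ : Finset (Fin d))
    Finset.univ_nonempty (fun i => ∑ j, ‖M i j‖₊)
  have hnorm : ‖M‖ = ∑ j, |M i j| := by
    rw [Matrix.linfty_opNorm_def, hi]
    push_cast
    simp [Real.norm_eq_abs]
  have htr : (M * Mᵀ).trace = ∑ i', ∑ j, (M i' j) ^ 2 := by
    simp [Matrix.trace, Matrix.diag, Matrix.mul_apply, sq]
  rw [hnorm, htr]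
  calc (∑ j, |M i j|) ^ 2 ≤ (((Finset.univ : Finset (Fin d)).card : ℝ)) * ∑ j, |M i j| ^ 2 :=
        sq_sum_le_card_mul_sum_sq
    _ = (d : ℝ) * ∑ j, (M i j) ^ 2 := by simp [sq_abs, Finset.card_univ]
    _ ≤ (d : ℝ) * ∑ i', ∑ j, (M i' j) ^ 2 := by
        refine mul_le_mul_of_nonneg_left ?_ (by positivity)
        exact Finset.single_le_sum (f := fun i' => ∑ j, (M i' j) ^ 2)
          (fun _ _ => Finset.sum_nonneg fun _ _ => sq_nonneg _) (Finset.mem_univ i)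

end aux

/-- Necessity direction of the summability criterion: if `Q` is positive definite and
`γ > 0` with `γ ρ(A)² ≥ 1`, then `∑_{j=1}^∞ γ^j Tr(f^j(P̄₀))` diverges. -/
theorem not_summable_weighted_trace {d : ℕ} (A Q P0 : Matrix (Fin d) (Fin d) ℝ)
    (hQ : Q.PosDef) (hP0 : P0.PosSemidef)
    (γ : ℝ) (hγ : 0 < γ) (hstab : 1 ≤ γ * (rho A) ^ 2) :
    ¬ Summable (fun j : ℕ => γ ^ (j + 1) * ((fop A Q)^[j + 1] P0).trace) := by
  classical
  -- the case `d = 0` contradicts `hstab`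
  rcases Nat.eq_zero_or_pos d with hd | hd
  · subst hd
    have hsp : spectrum ℂ (A.map Complex.ofReal) = ∅ := by
      refine Set.eq_empty_iff_forall_notMem.mpr fun z hz => ?_
      exact hz (isUnit_of_subsingleton _)
    have : rho A = 0 := by rw [rho, hsp, Set.image_empty, Real.sSup_empty]
    rw [this] at hstab
    norm_num at hstab
  haveI : Nonempty (Fin d) := ⟨⟨0, hd⟩⟩
  haveI : CompleteSpace (Matrix (Fin d) (Fin d) ℂ) := FiniteDimensional.complete ℂ _
  set Aℂ := A.map Complex.ofReal with hAc
  -- the spectral radius is attained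
  have hS : (fun z : ℂ => ‖z‖) '' spectrum ℂ Aℂ = (fun z : ℂ => ‖z‖) '' spectrum ℂ Aℂ := rfl
  have hne : ((fun z : ℂ => ‖z‖) '' spectrum ℂ Aℂ).Nonempty :=
    (spectrum.nonempty Aℂ).image _
  have hcpt : IsCompact ((fun z : ℂ => ‖z‖) '' spectrum ℂ Aℂ) :=
    (spectrum.isCompact Aℂ).image continuous_norm
  have hmem : rho A ∈ (fun z : ℂ => ‖z‖) '' spectrum ℂ Aℂ := hcpt.sSup_mem hne
  obtain ⟨lam, hlam, habs⟩ := hmem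
  have habs' : ‖lam‖ = rho A := habs
  have hr0 : 0 ≤ rho A := habs' ▸ norm_nonneg lam
  -- the spectral radius power bound
  have hpow : ∀ m : ℕ, (rho A) ^ m ≤ ‖A ^ m‖ := by
    intro m
    have h1 : lam ^ m ∈ spectrum ℂ (Aℂ ^ m) := by
      have hs := spectrum.subset_polynomial_aeval Aℂ ((Polynomial.X : Polynomial ℂ) ^ m)
      have : (fun k => Polynomial.eval k ((Polynomial.X : Polynomial ℂ) ^ m)) lam
          ∈ (fun k => Polynomial.eval k ((Polynomial.X : Polynomial ℂ) ^ m)) '' spectrum ℂ Aℂ :=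
        Set.mem_image_of_mem _ hlam
      have h2 := hs this
      simpa [map_pow, Polynomial.aeval_X, Polynomial.eval_pow, Polynomial.eval_X] using h2
    have h2 : ‖lam ^ m‖ ≤ ‖Aℂ ^ m‖ := spectrum.norm_le_norm_of_mem h1
    have h3 : Aℂ ^ m = (A ^ m).map Complex.ofReal := by
      rw [hAc]
      rw [show A.map Complex.ofReal = Complex.ofRealHom.mapMatrix A from rfl,
        ← map_pow, RingHom.mapMatrix_apply]
      rfl
    have h4 : ‖(A ^ m).map Complex.ofReal‖ = ‖A ^ m‖ := by
      rw [Matrix.linfty_opNorm_def, Matrix.linfty_opNorm_def]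
      congr 1
      refine Finset.sup_congr rfl fun i _ => Finset.sum_congr rfl fun j _ => ?_
      simp [Matrix.map_apply]
    calc (rho A) ^ m = ‖lam ^ m‖ := by
          rw [norm_pow, habs']
      _ ≤ ‖Aℂ ^ m‖ := by exact h2
      _ = ‖A ^ m‖ := by rw [h3, h4]
  -- pick ε with Q - ε•1 PSD
  obtain ⟨ε, hε, hQε⟩ := exists_eps hQ
  -- uniform positive lower bound on the terms
  set c : ℝ := γ * ε / d with hc
  have hcpos : 0 < c := by
    have : (0:ℝ) < d := by exact_mod_cast hd
    positivity
  have hbound : ∀ m : ℕ, c ≤ γ ^ (m + 1) * ((fop A Q)^[m + 1] P0).trace := by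
    intro m
    have h1 : (A ^ m * Q * (A ^ m)ᵀ).trace ≤ ((fop A Q)^[m + 1] P0).trace :=
      trace_le_of_psd_sub (key_psd A Q P0 hQ hP0 m)
    have h2 : ε * (A ^ m * (A ^ m)ᵀ).trace ≤ (A ^ m * Q * (A ^ m)ᵀ).trace :=
      trace_eps_le hQε (A ^ m)
    have h3 : ‖A ^ m‖ ^ 2 ≤ (d : ℝ) * (A ^ m * (A ^ m)ᵀ).trace := norm_sq_le_trace (A ^ m)
    have h4 : ((rho A) ^ m) ^ 2 ≤ ‖A ^ m‖ ^ 2 :=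
      pow_le_pow_left₀ (pow_nonneg hr0 m) (hpow m) 2
    have hdpos : (0:ℝ) < d := by exact_mod_cast hd
    have h5 : ε * ((rho A) ^ m) ^ 2 / d ≤ ((fop A Q)^[m + 1] P0).trace := by
      have h6 : ((rho A) ^ m) ^ 2 / d ≤ (A ^ m * (A ^ m)ᵀ).trace := by
        rw [div_le_iff₀ hdpos] at *
        nlinarith [h3, h4]
      have h7 : ε * (((rho A) ^ m) ^ 2 / d) ≤ ε * (A ^ m * (A ^ m)ᵀ).trace :=
        mul_le_mul_of_nonneg_left h6 hε.le
      calc ε * ((rho A) ^ m) ^ 2 / d = ε * (((rho A) ^ m) ^ 2 / d) := by ring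
        _ ≤ ε * (A ^ m * (A ^ m)ᵀ).trace := h7
        _ ≤ (A ^ m * Q * (A ^ m)ᵀ).trace := h2
        _ ≤ ((fop A Q)^[m + 1] P0).trace := h1
    have hrr : ((rho A) ^ 2) ^ m = ((rho A) ^ m) ^ 2 := by
      rw [← pow_mul, ← pow_mul, Nat.mul_comm]
    have h8 : c * (γ * (rho A) ^ 2) ^ m = γ ^ (m + 1) * (ε * ((rho A) ^ m) ^ 2 / d) := by
      rw [mul_pow, hrr, hc, pow_succ]
      ring
    have hone : (1:ℝ) ≤ (γ * (rho A) ^ 2) ^ m := by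
      have := pow_le_pow_left₀ (zero_le_one) hstab m
      simpa using this
    have h9 : c ≤ c * (γ * (rho A) ^ 2) ^ m :=
      le_mul_of_one_le_right hcpos.le hone
    calc c ≤ c * (γ * (rho A) ^ 2) ^ m := h9
      _ = γ ^ (m + 1) * (ε * ((rho A) ^ m) ^ 2 / d) := h8
      _ ≤ γ ^ (m + 1) * ((fop A Q)^[m + 1] P0).trace :=
          mul_le_mul_of_nonneg_left h5 (pow_nonneg hγ.le _)
  intro hsum
  have h0 := hsum.tendsto_atTop_zero
  have hev : ∀ᶠ m in Filter.atTop,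
      γ ^ (m + 1) * ((fop A Q)^[m + 1] P0).trace < c := h0.eventually (gt_mem_nhds hcpos)
  obtain ⟨m, hm⟩ := hev.exists
  exact absurd (hbound m) (not_le.mpr hm)
end

section
/- Let g : ℕ → [0,1] satisfy g(0) = 1 − λ and g(r) ≤ 1 − λ′ for all r ≥ 1, where λ, λ′ ∈ (0,1], and suppose (1−λ′) · ρ(A)² < 1 and 1 − λ′ < 1. Then for every integer i ≥ 1, the expected first-passage-cost series ν(i) = c(i) + ∑_{j=1}^∞ α_j c(i+j) converges (is finite), where α_j = ∏_{l=1}^{j} g(l−1) and c(q) = Tr(f^{q+1}(P̄₀)). (Finiteness of ν(i) in the proof of Theorem 1.) -/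
open Matrix
open scoped ENNReal NNReal

lemma fop_iter_eq {d : ℕ} (A Q P0 : Matrix (Fin d) (Fin d) ℝ) :
    ∀ n : ℕ, (fop A Q)^[n] P0 =
      A ^ n * P0 * (A ^ n)ᵀ + ∑ j ∈ Finset.range n, A ^ j * Q * (A ^ j)ᵀ := by
  intro n
  induction n with
  | zero => simp
  | succ n ih =>
    rw [Function.iterate_succ_apply', ih]
    unfold fop
    have h2 : ∀ j : ℕ, A * (A ^ j * Q * (A ^ j)ᵀ) * Aᵀ = A ^ (j+1) * Q * (A ^ (j+1))ᵀ := by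
      intro j
      rw [Matrix.transpose_pow, Matrix.transpose_pow, show A ^ (j+1) = A * A ^ j from pow_succ' A j,
        show (Aᵀ) ^ (j+1) = (Aᵀ) ^ j * Aᵀ from pow_succ Aᵀ j]
      simp only [Matrix.mul_assoc]
    have h1 : A * (A ^ n * P0 * (A ^ n)ᵀ) * Aᵀ = A ^ (n+1) * P0 * (A ^ (n+1))ᵀ := by
      rw [Matrix.transpose_pow, Matrix.transpose_pow, show A ^ (n+1) = A * A ^ n from pow_succ' A n,
        show (Aᵀ) ^ (n+1) = (Aᵀ) ^ n * Aᵀ from pow_succ Aᵀ n]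
      simp only [Matrix.mul_assoc]
    have h3 : A * (∑ j ∈ Finset.range n, A ^ j * Q * (A ^ j)ᵀ) * Aᵀ
        = ∑ j ∈ Finset.range n, A ^ (j+1) * Q * (A ^ (j+1))ᵀ := by
      rw [Finset.mul_sum, Finset.sum_mul]
      exact Finset.sum_congr rfl fun j _ => h2 j
    rw [Matrix.mul_add, Matrix.add_mul, h1, h3, Finset.sum_range_succ']
    simp [add_assoc]

lemma trace_mul_mul_transpose_le {d : ℕ} (B M : Matrix (Fin d) (Fin d) ℝ) {b : ℝ}
    (hb : 0 ≤ b) (hB : ∀ i j, |B i j| ≤ b) :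
    |(B * M * Bᵀ).trace| ≤ (d : ℝ) * b ^ 2 * ∑ k, ∑ l, |M k l| := by
  have hdiag : ∀ i, |(B * M * Bᵀ) i i| ≤ b ^ 2 * ∑ k, ∑ l, |M k l| := by
    intro i
    have he : (B * M * Bᵀ) i i = ∑ l, ∑ k, B i k * M k l * B i l := by
      simp [Matrix.mul_apply, Finset.sum_mul, Matrix.transpose_apply]
    rw [he]
    calc |∑ l, ∑ k, B i k * M k l * B i l| ≤ ∑ l, ∑ k, |B i k * M k l * B i l| := by
          refine (Finset.abs_sum_le_sum_abs _ _).trans ?_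
          exact Finset.sum_le_sum fun l _ => Finset.abs_sum_le_sum_abs _ _
      _ ≤ ∑ l, ∑ k, b * |M k l| * b := by
          refine Finset.sum_le_sum fun l _ => Finset.sum_le_sum fun k _ => ?_
          rw [abs_mul, abs_mul]
          have h1 : |B i k| * |M k l| ≤ b * |M k l| :=
            mul_le_mul_of_nonneg_right (hB i k) (abs_nonneg _)
          exact mul_le_mul h1 (hB i l) (abs_nonneg _) (by positivity)
      _ = b ^ 2 * ∑ k, ∑ l, |M k l| := by
          rw [Finset.sum_comm, Finset.mul_sum]
          refine Finset.sum_congr rfl fun k _ => ?_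
          rw [Finset.mul_sum]
          exact Finset.sum_congr rfl fun l _ => by ring
  calc |(B * M * Bᵀ).trace| ≤ ∑ i, |(B * M * Bᵀ) i i| := Finset.abs_sum_le_sum_abs _ _
    _ ≤ ∑ _i : Fin d, b ^ 2 * ∑ k, ∑ l, |M k l| := Finset.sum_le_sum fun i _ => hdiag i
    _ = (d : ℝ) * b ^ 2 * ∑ k, ∑ l, |M k l| := by
        rw [Finset.sum_const, Finset.card_univ, Fintype.card_fin, nsmul_eq_mul]; ring

attribute [local instance] Matrix.linftyOpNormedRing Matrix.linftyOpNormedAlgebra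

lemma entry_le_linfty {d : ℕ} (X : Matrix (Fin d) (Fin d) ℂ) (i j : Fin d) :
    ‖X i j‖ ≤ ‖X‖ := by
  have h : ‖X i j‖₊ ≤ ‖X‖₊ := by
    rw [Matrix.linfty_opNNNorm_def]
    calc ‖X i j‖₊ ≤ ∑ j', ‖X i j'‖₊ :=
          Finset.single_le_sum (f := fun j' => ‖X i j'‖₊) (fun _ _ => by positivity)
            (Finset.mem_univ j)
      _ ≤ _ := Finset.le_sup (f := fun i => ∑ j', ‖X i j'‖₊) (Finset.mem_univ i)
  exact_mod_cast h

lemma exists_pow_entry_bound {d : ℕ} (A : Matrix (Fin d) (Fin d) ℝ) {t : ℝ}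
    (ht0 : 0 < t) (ht : rho A < t) :
    ∃ C : ℝ, 1 ≤ C ∧ ∀ (n : ℕ) (i j : Fin d), |(A ^ n) i j| ≤ C * t ^ n := by
  set B : Matrix (Fin d) (Fin d) ℂ := A.map Complex.ofReal with hBdef
  have hBpow : ∀ n : ℕ, B ^ n = (A ^ n).map Complex.ofReal := by
    intro n
    have := map_pow (Complex.ofRealHom.mapMatrix (m := Fin d)) A n
    exact this.symm
  have hsr : spectralRadius ℂ B < ENNReal.ofReal t := by
    have hle : spectralRadius ℂ B ≤ ENNReal.ofReal (rho A) := by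
      rw [spectralRadius]
      refine iSup₂_le fun z hz => ?_
      have hbdd : BddAbove ((fun z : ℂ => ‖z‖) '' spectrum ℂ B) := by
        refine ⟨‖B‖ * ‖(1 : Matrix (Fin d) (Fin d) ℂ)‖, ?_⟩
        rintro _ ⟨w, hw, rfl⟩
        exact spectrum.norm_le_norm_mul_of_mem hw
      have hzr : ‖z‖ ≤ rho A := le_csSup hbdd ⟨z, hz, rfl⟩
      have h0 : (‖z‖₊ : ℝ≥0∞) = ENNReal.ofReal ‖z‖ := by
        rw [ofReal_norm]; rfl
      rw [h0]
      exact ENNReal.ofReal_le_ofReal hzr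
    exact hle.trans_lt ((ENNReal.ofReal_lt_ofReal_iff ht0).mpr ht)
  have htend := spectrum.pow_nnnorm_pow_one_div_tendsto_nhds_spectralRadius B
  have hev : ∀ᶠ n : ℕ in Filter.atTop,
      (‖B ^ n‖₊ : ℝ≥0∞) ^ (1 / (n : ℝ)) < ENNReal.ofReal t :=
    htend.eventually_lt_const hsr
  obtain ⟨N, hN⟩ := Filter.eventually_atTop.mp hev
  have key : ∀ n : ℕ, N + 1 ≤ n → ‖B ^ n‖ ≤ t ^ n := by
    intro n hn
    have h := hN n (by omega)
    have hn0 : (n : ℝ) ≠ 0 := Nat.cast_ne_zero.mpr (by omega)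
    have h2 : ((‖B ^ n‖₊ : ℝ≥0∞) ^ (1 / (n : ℝ))) ^ (n : ℝ)
        ≤ (ENNReal.ofReal t) ^ (n : ℝ) :=
      ENNReal.rpow_le_rpow h.le (by positivity)
    rw [← ENNReal.rpow_mul, one_div, inv_mul_cancel₀ hn0, ENNReal.rpow_one] at h2
    rw [ENNReal.ofReal_rpow_of_pos ht0] at h2
    rw [← enorm_eq_nnnorm, ← ofReal_norm, Real.rpow_natCast] at h2
    exact (ENNReal.ofReal_le_ofReal_iff (by positivity)).mp h2
  refine ⟨(∑ m ∈ Finset.range (N + 1), ‖B ^ m‖ / t ^ m) + 1, ?_, ?_⟩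
  · have : (0 : ℝ) ≤ ∑ m ∈ Finset.range (N + 1), ‖B ^ m‖ / t ^ m :=
      Finset.sum_nonneg fun m _ => by positivity
    linarith
  · intro n i j
    set C : ℝ := (∑ m ∈ Finset.range (N + 1), ‖B ^ m‖ / t ^ m) + 1 with hC
    have hC1 : 1 ≤ C := by
      have : (0 : ℝ) ≤ ∑ m ∈ Finset.range (N + 1), ‖B ^ m‖ / t ^ m :=
        Finset.sum_nonneg fun m _ => by positivity
      simp [hC]; linarith
    have hnorm : ‖B ^ n‖ ≤ C * t ^ n := by
      rcases le_or_gt (N + 1) n with hn | hn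
      · calc ‖B ^ n‖ ≤ t ^ n := key n hn
          _ ≤ C * t ^ n := le_mul_of_one_le_left (by positivity) hC1
      · have hmem : n ∈ Finset.range (N + 1) := Finset.mem_range.mpr hn
        have h1 : ‖B ^ n‖ / t ^ n ≤ ∑ m ∈ Finset.range (N + 1), ‖B ^ m‖ / t ^ m :=
          Finset.single_le_sum (f := fun m => ‖B ^ m‖ / t ^ m)
            (fun m _ => by positivity) hmem
        have h2 : ‖B ^ n‖ / t ^ n ≤ C := by simp only [hC]; linarith
        calc ‖B ^ n‖ = (‖B ^ n‖ / t ^ n) * t ^ n := by field_simp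
          _ ≤ C * t ^ n := mul_le_mul_of_nonneg_right h2 (by positivity)
    have hentry : |(A ^ n) i j| = ‖(B ^ n) i j‖ := by
      rw [hBpow n]
      simp [Matrix.map_apply]
    rw [hentry]
    exact (entry_le_linfty _ i j).trans hnorm


set_option maxHeartbeats 1000000 in
/-- Finiteness of the expected first-passage cost `ν(i)` in the proof of Theorem 1:
for every `i ≥ 1`, the series `∑_{j=1}^∞ α_j c(i+j)` converges, where
`α_j = ∏_{l=1}^{j} g(l−1)` and `c(q) = Tr(f^{q+1}(P̄₀))`.  (The series is reindexed via
`j = k + 1`, so the summand at `k` is `α_{k+1} c(i+k+1) = (∏_{l∈range(k+1)} g l) ·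
Tr(f^{i+k+2}(P̄₀))`.) -/
theorem nu_summable {d : ℕ} (A Q P0 : Matrix (Fin d) (Fin d) ℝ)
    (hQ : Q.PosSemidef) (hP0 : P0.PosSemidef)
    (g : ℕ → ℝ) (lam lam' : ℝ)
    (hlam : lam ∈ Set.Ioc (0 : ℝ) 1) (hlam' : lam' ∈ Set.Ioc (0 : ℝ) 1)
    (hg : ∀ r : ℕ, g r ∈ Set.Icc (0 : ℝ) 1)
    (hg0 : g 0 = 1 - lam) (hgr : ∀ r : ℕ, 1 ≤ r → g r ≤ 1 - lam')
    (hstab : (1 - lam') * (rho A) ^ 2 < 1) (hlt : 1 - lam' < 1) :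
    ∀ i : ℕ, 1 ≤ i →
      Summable (fun k : ℕ =>
        (∏ l ∈ Finset.range (k + 1), g l) * ((fop A Q)^[i + k + 2] P0).trace) := by
  intro i _hi
  have hβ0 : (0 : ℝ) ≤ 1 - lam' := by have := hlam'.2; linarith
  have hρ0 : 0 ≤ rho A := Real.sSup_nonneg (by rintro _ ⟨z, _, rfl⟩; exact norm_nonneg _)
  obtain ⟨t, ht0, hρt, hβt⟩ : ∃ t : ℝ, 0 < t ∧ rho A < t ∧ (1 - lam') * t ^ 2 < 1 := by
    by_cases hβ : (1 - lam') = 0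
    · exact ⟨rho A + 1, by linarith, by linarith, by rw [hβ]; norm_num⟩
    · have hβpos : 0 < 1 - lam' := lt_of_le_of_ne hβ0 (Ne.symm hβ)
      set u : ℝ := (Real.sqrt (1 - lam'))⁻¹ with hu
      have hupos : 0 < u := inv_pos.mpr (Real.sqrt_pos.mpr hβpos)
      have hu2 : u ^ 2 = (1 - lam')⁻¹ := by
        rw [hu, inv_pow, Real.sq_sqrt hβ0]
      have hβu : (1 - lam') * u ^ 2 = 1 := by
        rw [hu2, mul_inv_cancel₀ hβpos.ne']
      have hρ2 : rho A ^ 2 < u ^ 2 := by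
        have : (1 - lam') * rho A ^ 2 < (1 - lam') * u ^ 2 := by rw [hβu]; exact hstab
        exact lt_of_mul_lt_mul_left this hβ0
      have hρu : rho A < u := by nlinarith
      refine ⟨(rho A + u) / 2, by linarith, by linarith, ?_⟩
      have ht2 : ((rho A + u) / 2) ^ 2 < u ^ 2 := by nlinarith
      nlinarith
  obtain ⟨C, hC1, hCb⟩ := exists_pow_entry_bound A ht0 hρt
  have hC0 : (0 : ℝ) < C := lt_of_lt_of_le one_pos hC1
  set t' : ℝ := max 1 t with ht'def
  have ht'1 : (1 : ℝ) ≤ t' := le_max_left _ _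
  have htt' : t ≤ t' := le_max_right _ _
  have ht'0 : (0 : ℝ) < t' := lt_of_lt_of_le one_pos ht'1
  have hr1 : (1 - lam') * t' ^ 2 < 1 := by
    rcases le_total 1 t with h | h
    · rw [ht'def, max_eq_right h]; exact hβt
    · rw [ht'def, max_eq_left h]; simpa using hlt
  set SP : ℝ := ∑ k, ∑ l, |P0 k l| with hSPdef
  set SQ : ℝ := ∑ k, ∑ l, |Q k l| with hSQdef
  have hSP0 : 0 ≤ SP :=
    Finset.sum_nonneg fun _ _ => Finset.sum_nonneg fun _ _ => abs_nonneg _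
  have hSQ0 : 0 ≤ SQ :=
    Finset.sum_nonneg fun _ _ => Finset.sum_nonneg fun _ _ => abs_nonneg _
  set D : ℝ := (d : ℝ) * C ^ 2 * (SP + SQ) with hDdef
  have hD0 : 0 ≤ D := by positivity
  -- growth bound on the traces
  have hb : ∀ (m : ℕ) (i' j' : Fin d), |(A ^ m) i' j'| ≤ C * t' ^ m := by
    intro m i' j'
    refine (hCb m i' j').trans ?_
    have h1 : t ^ m ≤ t' ^ m := pow_le_pow_left₀ ht0.le htt' m
    exact mul_le_mul_of_nonneg_left h1 hC0.le
  have key : ∀ n : ℕ, |((fop A Q)^[n] P0).trace| ≤ D * ((n : ℝ) + 1) * (t' ^ 2) ^ n := by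
    intro n
    rw [fop_iter_eq]
    rw [Matrix.trace_add, Matrix.trace_sum]
    have h1 : |(A ^ n * P0 * (A ^ n)ᵀ).trace| ≤ (d : ℝ) * (C * t' ^ n) ^ 2 * SP :=
      trace_mul_mul_transpose_le _ _ (by positivity) (hb n)
    have h2 : ∀ j ∈ Finset.range n,
        |(A ^ j * Q * (A ^ j)ᵀ).trace| ≤ (d : ℝ) * C ^ 2 * (t' ^ 2) ^ n * SQ := by
      intro j hj
      refine (trace_mul_mul_transpose_le (A ^ j) Q (b := C * t' ^ j)
        (by positivity) (hb j)).trans ?_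
      have hpow : (t' ^ j) ^ 2 ≤ (t' ^ 2) ^ n := by
        rw [← pow_mul, ← pow_mul]
        exact pow_le_pow_right₀ ht'1 (by have := Finset.mem_range.mp hj; omega)
      calc (d : ℝ) * (C * t' ^ j) ^ 2 * SQ
          = ((d : ℝ) * C ^ 2 * SQ) * (t' ^ j) ^ 2 := by ring
        _ ≤ ((d : ℝ) * C ^ 2 * SQ) * (t' ^ 2) ^ n := by
            exact mul_le_mul_of_nonneg_left hpow (by positivity)
        _ = (d : ℝ) * C ^ 2 * (t' ^ 2) ^ n * SQ := by ring
    have hsum2 : |∑ j ∈ Finset.range n, (A ^ j * Q * (A ^ j)ᵀ).trace|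
        ≤ (n : ℝ) * ((d : ℝ) * C ^ 2 * (t' ^ 2) ^ n * SQ) := by
      refine (Finset.abs_sum_le_sum_abs _ _).trans ?_
      refine (Finset.sum_le_sum h2).trans ?_
      rw [Finset.sum_const, Finset.card_range, nsmul_eq_mul]
    have h1' : |(A ^ n * P0 * (A ^ n)ᵀ).trace|
        ≤ (d : ℝ) * C ^ 2 * (t' ^ 2) ^ n * SP := by
      refine h1.trans (le_of_eq ?_)
      ring
    calc |(A ^ n * P0 * (A ^ n)ᵀ).trace + ∑ j ∈ Finset.range n, (A ^ j * Q * (A ^ j)ᵀ).trace|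
        ≤ |(A ^ n * P0 * (A ^ n)ᵀ).trace|
          + |∑ j ∈ Finset.range n, (A ^ j * Q * (A ^ j)ᵀ).trace| := abs_add_le _ _
      _ ≤ (d : ℝ) * C ^ 2 * (t' ^ 2) ^ n * SP
          + (n : ℝ) * ((d : ℝ) * C ^ 2 * (t' ^ 2) ^ n * SQ) := add_le_add h1' hsum2
      _ = ((d : ℝ) * C ^ 2 * (t' ^ 2) ^ n) * (SP + (n : ℝ) * SQ) := by ring
      _ ≤ ((d : ℝ) * C ^ 2 * (t' ^ 2) ^ n) * (((n : ℝ) + 1) * (SP + SQ)) := by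
          refine mul_le_mul_of_nonneg_left ?_ (by positivity)
          have hn0 : (0 : ℝ) ≤ (n : ℝ) := Nat.cast_nonneg n
          nlinarith
      _ = D * ((n : ℝ) + 1) * (t' ^ 2) ^ n := by rw [hDdef]; ring
  -- product bound
  have hprod0 : ∀ k : ℕ, 0 ≤ ∏ l ∈ Finset.range (k + 1), g l := fun k =>
    Finset.prod_nonneg fun l _ => (hg l).1
  have hprod : ∀ k : ℕ, ∏ l ∈ Finset.range (k + 1), g l ≤ (1 - lam') ^ k := by
    intro k
    induction k with
    | zero => simpa using (hg 0).2
    | succ k ih =>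
      rw [Finset.prod_range_succ]
      calc (∏ l ∈ Finset.range (k + 1), g l) * g (k + 1) ≤ (1 - lam') ^ k * (1 - lam') :=
            mul_le_mul ih (hgr (k + 1) (by omega)) (hg (k + 1)).1 (pow_nonneg hβ0 k)
        _ = (1 - lam') ^ (k + 1) := (pow_succ _ k).symm
  -- final summability
  set r : ℝ := (1 - lam') * t' ^ 2 with hrdef
  have hr0 : 0 ≤ r := by positivity
  have hrlt : r < 1 := hr1
  have hsum : Summable (fun k : ℕ =>
      (D * (t' ^ 2) ^ (i + 2)) * (((i : ℝ) + (k : ℝ) + 3) * r ^ k)) := by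
    have h1 : Summable (fun k : ℕ => (k : ℝ) * r ^ k) := by
      have := summable_pow_mul_geometric_of_norm_lt_one (R := ℝ) (r := r) 1
        (by rw [Real.norm_eq_abs, abs_of_nonneg hr0]; exact hrlt)
      simpa using this
    have h2 : Summable (fun k : ℕ => r ^ k) := summable_geometric_of_lt_one hr0 hrlt
    have h3 : Summable (fun k : ℕ => ((i : ℝ) + 3) * r ^ k + (k : ℝ) * r ^ k) :=
      (h2.mul_left _).add h1
    have h4 : Summable (fun k : ℕ => ((i : ℝ) + (k : ℝ) + 3) * r ^ k) := by
      refine h3.congr fun k => ?_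
      ring
    exact h4.mul_left _
  refine Summable.of_norm_bounded hsum ?_
  intro k
  rw [Real.norm_eq_abs, abs_mul]
  have h5 : |∏ l ∈ Finset.range (k + 1), g l| ≤ (1 - lam') ^ k := by
    rw [abs_of_nonneg (hprod0 k)]; exact hprod k
  calc |∏ l ∈ Finset.range (k + 1), g l| * |((fop A Q)^[i + k + 2] P0).trace|
      ≤ (1 - lam') ^ k * (D * (((i + k + 2 : ℕ) : ℝ) + 1) * (t' ^ 2) ^ (i + k + 2)) :=
        mul_le_mul h5 (key (i + k + 2)) (abs_nonneg _) (pow_nonneg hβ0 k)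
    _ = (D * (t' ^ 2) ^ (i + 2)) * (((i : ℝ) + (k : ℝ) + 3) * r ^ k) := by
        rw [show i + k + 2 = (i + 2) + k from by omega, pow_add, hrdef, mul_pow]
        push_cast
        ring
end

section
/- Suppose P̄₀ ⪯ f(P̄₀) in the Loewner order, and let g : ℕ → [0,1] satisfy g(0) > g(r+1) for the given r ∈ ℕ. If condition (16) fails at state (r,q) (so the suboptimal policy of Proposition 1 takes action 1, retransmission), then condition (16) also fails at state (r, q+z) for every positive integer z. (The suboptimal policy of Proposition 1 is of switching type in the estimation-quality index q.) -/
open Matrix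

/-- Condition (16) at state `(r,q)`:
`Tr(f^{q+2}(P̄₀)) ≤ [(1−g(r+1))Tr(f^{r+2}(P̄₀)) − (1−g(0))Tr(f(P̄₀))]/(g(0)−g(r+1))`. -/
def cond16 {d : ℕ} (A Q P0 : Matrix (Fin d) (Fin d) ℝ) (g : ℕ → ℝ) (r q : ℕ) : Prop :=
  ((fop A Q)^[q + 2] P0).trace ≤
    ((1 - g (r + 1)) * ((fop A Q)^[r + 2] P0).trace -
        (1 - g 0) * (fop A Q P0).trace) / (g 0 - g (r + 1))

lemma fop_psd_diff {d : ℕ} (A Q : Matrix (Fin d) (Fin d) ℝ) {X Y : Matrix (Fin d) (Fin d) ℝ}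
    (h : (X - Y).PosSemidef) : (fop A Q X - fop A Q Y).PosSemidef := by
  have : fop A Q X - fop A Q Y = A * (X - Y) * Aᴴ := by
    rw [conjTranspose_eq_transpose_of_trivial]
    simp only [fop, Matrix.mul_sub, Matrix.sub_mul]
    abel
  rw [this]
  exact h.mul_mul_conjTranspose_same A

lemma iter_diff_psd {d : ℕ} (A Q P0 : Matrix (Fin d) (Fin d) ℝ)
    (hmono : (fop A Q P0 - P0).PosSemidef) (n : ℕ) :
    ((fop A Q)^[n + 1] P0 - (fop A Q)^[n] P0).PosSemidef := by
  induction n with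
  | zero => simpa using hmono
  | succ k ih =>
    have := fop_psd_diff A Q ih
    simpa only [← Function.iterate_succ_apply'] using this

lemma iter_trace_mono {d : ℕ} (A Q P0 : Matrix (Fin d) (Fin d) ℝ)
    (hmono : (fop A Q P0 - P0).PosSemidef) {m n : ℕ} (h : m ≤ n) :
    ((fop A Q)^[m] P0).trace ≤ ((fop A Q)^[n] P0).trace := by
  induction n with
  | zero => simp_all
  | succ k ih =>
    rcases Nat.lt_or_ge m (k + 1) with hlt | hge
    · have hpsd := iter_diff_psd A Q P0 hmono k
      have htr : (0:ℝ) ≤ ((fop A Q)^[k+1] P0 - (fop A Q)^[k] P0).trace := by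
        rw [Matrix.trace]
        refine Finset.sum_nonneg fun i _ => ?_
        exact hpsd.diag_nonneg
      rw [trace_sub] at htr
      linarith [ih (Nat.lt_succ_iff.mp hlt), htr]
    · have : m = k + 1 := le_antisymm h hge
      simp [this]

/-- The suboptimal policy of Proposition 1 is of switching type in the estimation-quality
index `q`: assuming `P̄₀ ⪯ f(P̄₀)` and `g(r+1) < g(0)`, if condition (16) fails at state
`(r,q)` (so the policy retransmits), then it fails at `(r, q+z)` for every `z ≥ 1`. -/
theorem suboptimal_switching {d : ℕ} (A Q P0 : Matrix (Fin d) (Fin d) ℝ)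
    (hQ : Q.PosSemidef) (hP0 : P0.PosSemidef)
    (hmono : (fop A Q P0 - P0).PosSemidef)
    (g : ℕ → ℝ) (hg : ∀ r : ℕ, g r ∈ Set.Icc (0 : ℝ) 1)
    (r : ℕ) (hgr : g (r + 1) < g 0) (q : ℕ)
    (hfail : ¬ cond16 A Q P0 g r q) :
    ∀ z : ℕ, 1 ≤ z → ¬ cond16 A Q P0 g r (q + z) := by
  intro z _ hc
  apply hfail
  unfold cond16 at *
  have := iter_trace_mono A Q P0 hmono (m := q + 2) (n := q + z + 2) (by omega)
  linarith
end
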